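/- Let z be a complex number that is not a negative integer. The infinite series ∑_{k=1}^{∞} (k−1)!/((z+1)(z+2)⋯(z+k)) converges if and only if Re(z) > 0, and when Re(z) > 0 its sum equals 1/z. -/

import Mathlib

open Filter Finset Complex Topology


private lemma aux_step (F w P z : ℂ) (hz : z ≠ 0) (hP : P ≠ 0) (hw : w ≠ 0) :
    1 / z - F / (z * P) + F / (P * w) = 1 / z - (w - z) * F / (z * (P * w)) := by
  field_simp
  ring

private lemma aux_cancel (q X : ℂ) (hq : q ≠ 0) : q * X * q⁻¹ = X := by
  rw [mul_comm q X, mul_assoc, mul_inv_cancel₀ hq, mul_one]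

private lemma aux_sum_eq (z : ℂ) (hz0 : z ≠ 0)
    (hzk : ∀ i : ℕ, z + ((i : ℂ) + 1) ≠ 0) (N : ℕ) :
    ∑ j ∈ range N, (Nat.factorial j : ℂ) / ∏ i ∈ range (j + 1), (z + (i + 1))
      = 1 / z - (Nat.factorial N : ℂ) / (z * ∏ i ∈ range N, (z + (i + 1))) := by
  induction N with
  | zero => simp
  | succ N ih =>
    have hP : (∏ i ∈ range N, (z + ((i : ℂ) + 1))) ≠ 0 :=
      Finset.prod_ne_zero_iff.2 fun i _ => hzk i
    have h1 : z + ((N : ℂ) + 1) ≠ 0 := hzk N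
    have h2 : (Nat.factorial (N + 1) : ℂ) = ((N : ℂ) + 1) * Nat.factorial N := by
      push_cast [Nat.factorial_succ]; ring
    rw [Finset.sum_range_succ, ih, Finset.prod_range_succ, h2]
    have := aux_step (Nat.factorial N : ℂ) (z + ((N : ℂ) + 1))
      (∏ i ∈ range N, (z + ((i : ℂ) + 1))) z hz0 hP h1
    linear_combination this

private lemma aux_R_eq (z : ℂ) {n : ℕ} (hn : 1 ≤ n) :
    (Nat.factorial n : ℂ) / (z * ∏ i ∈ range n, (z + (i + 1)))
      = Complex.GammaSeq z n * (n : ℂ) ^ (-z) := by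
  have hn0 : (n : ℂ) ≠ 0 := Nat.cast_ne_zero.2 (by omega)
  have hpow : (n : ℂ) ^ z ≠ 0 := by
    rw [Complex.cpow_def_of_ne_zero hn0]; exact Complex.exp_ne_zero _
  have hprod : ∏ j ∈ range (n + 1), (z + (j : ℂ)) = z * ∏ i ∈ range n, (z + ((i : ℂ) + 1)) := by
    rw [Finset.prod_range_succ']
    simp only [Nat.cast_zero, add_zero, Nat.cast_add, Nat.cast_one]
    rw [mul_comm]
  rw [Complex.GammaSeq, hprod, Complex.cpow_neg, mul_div_assoc, aux_cancel _ _ hpow]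



private lemma aux_no_limit (z : ℂ) (hre : z.re = 0) (him : z.im ≠ 0) (c : ℂ)
    (hc : Filter.Tendsto (fun n : ℕ => (n : ℂ) ^ (-z)) Filter.atTop (nhds c)) : False := by
  -- ‖c‖ = 1, so c ≠ 0
  have hnorm : ∀ n : ℕ, 1 ≤ n → ‖(n : ℂ) ^ (-z)‖ = 1 := by
    intro n hn
    rw [Complex.norm_natCast_cpow_of_pos (by omega), Complex.neg_re, hre, neg_zero,
      Real.rpow_zero]
  have hcnorm : ‖c‖ = 1 := by
    have h1 : Tendsto (fun n : ℕ => ‖(n : ℂ) ^ (-z)‖) atTop (𝓝 ‖c‖) := hc.norm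
    have h2 : Tendsto (fun n : ℕ => ‖(n : ℂ) ^ (-z)‖) atTop (𝓝 1) := by
      refine Tendsto.congr' ?_ tendsto_const_nhds
      filter_upwards [eventually_ge_atTop 1] with n hn using (hnorm n hn).symm
    exact tendsto_nhds_unique h1 h2
  have hc0 : c ≠ 0 := by intro h; rw [h, norm_zero] at hcnorm; norm_num at hcnorm
  set y := z.im with hy
  set a := Real.exp (Real.pi / y) with ha
  have ha0 : 0 < a := Real.exp_pos _
  set k : ℕ → ℕ := fun n => ⌊a * n⌋₊ with hk
  have hktop : Tendsto k atTop atTop := tendsto_nat_floor_mul_atTop a ha0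
  -- limit 1
  have h1 : Tendsto (fun n : ℕ => ((k n : ℂ)) ^ (-z) * (((n : ℂ)) ^ (-z))⁻¹) atTop
      (𝓝 (c * c⁻¹)) := (hc.comp hktop).mul (hc.inv₀ hc0)
  rw [mul_inv_cancel₀ hc0] at h1
  -- limit exp(log a * (-z))
  have hratio : Tendsto (fun n : ℕ => ((k n : ℝ)) / (n : ℝ)) atTop (𝓝 a) :=
    (tendsto_nat_floor_mul_div_atTop ha0.le).comp tendsto_natCast_atTop_atTop
  have hlog : Tendsto (fun n : ℕ => Real.log ((k n : ℝ) / (n : ℝ))) atTop (𝓝 (Real.log a)) :=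
    ((Real.continuousAt_log ha0.ne').tendsto).comp hratio
  have h2' : Tendsto (fun n : ℕ => Complex.exp ((Real.log ((k n : ℝ) / (n : ℝ)) : ℂ) * (-z)))
      atTop (𝓝 (Complex.exp ((Real.log a : ℂ) * (-z)))) := by
    apply (Complex.continuous_exp.tendsto _).comp
    exact ((Complex.continuous_ofReal.tendsto _).comp hlog).mul_const (-z)
  have heq : ∀ᶠ n : ℕ in atTop,
      Complex.exp ((Real.log ((k n : ℝ) / (n : ℝ)) : ℂ) * (-z))
        = ((k n : ℂ)) ^ (-z) * (((n : ℂ)) ^ (-z))⁻¹ := by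
    have h1k : ∀ᶠ n : ℕ in atTop, 1 ≤ k n := hktop.eventually_ge_atTop 1
    filter_upwards [eventually_ge_atTop 1, h1k] with n hn hkn
    have hn0 : (0:ℝ) < n := by exact_mod_cast hn
    have hkn0 : (0:ℝ) < k n := by exact_mod_cast hkn
    have hnC : (n : ℂ) ≠ 0 := Nat.cast_ne_zero.2 (by omega)
    have hknC : ((k n) : ℂ) ≠ 0 := Nat.cast_ne_zero.2 (by omega)
    rw [Complex.cpow_def_of_ne_zero hnC, Complex.cpow_def_of_ne_zero hknC,
      ← Complex.exp_neg, ← Complex.exp_add, ← Complex.natCast_log, ← Complex.natCast_log,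
      Real.log_div hkn0.ne' hn0.ne']
    push_cast
    ring_nf
  have h2 : Tendsto (fun n : ℕ => ((k n : ℂ)) ^ (-z) * (((n : ℂ)) ^ (-z))⁻¹) atTop
      (𝓝 (Complex.exp ((Real.log a : ℂ) * (-z)))) := h2'.congr' heq
  have hval : Complex.exp ((Real.log a : ℂ) * (-z)) = -1 := by
    have hzz : z = (y : ℂ) * Complex.I := by
      rw [← Complex.re_add_im z, hre]; simp [hy]
    have hyC : (y : ℂ) ≠ 0 := Complex.ofReal_ne_zero.2 him
    rw [ha, Real.log_exp, hzz]
    have : ((Real.pi / y : ℝ) : ℂ) * -((y : ℂ) * Complex.I) = -((Real.pi : ℂ) * Complex.I) := by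
      push_cast
      field_simp
    rw [this, Complex.exp_neg, Complex.exp_pi_mul_I]
    norm_num
  rw [hval] at h2
  have : (1 : ℂ) = -1 := tendsto_nhds_unique h1 h2
  norm_num at this

theorem stmt_13 (z : ℂ) (hz : ∀ n : ℤ, n < 0 → z ≠ (n : ℂ)) :
    ((∃ L : ℂ, Filter.Tendsto
        (fun N : ℕ => ∑ j ∈ Finset.range N,
          (Nat.factorial j : ℂ) / ∏ i ∈ Finset.range (j + 1), (z + (i + 1)))
        Filter.atTop (nhds L)) ↔ 0 < z.re) ∧
    (0 < z.re → Filter.Tendsto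
        (fun N : ℕ => ∑ j ∈ Finset.range N,
          (Nat.factorial j : ℂ) / ∏ i ∈ Finset.range (j + 1), (z + (i + 1)))
        Filter.atTop (nhds (1 / z))) := by
  set S : ℕ → ℂ := fun N => ∑ j ∈ Finset.range N,
      (Nat.factorial j : ℂ) / ∏ i ∈ Finset.range (j + 1), (z + (i + 1)) with hS
  by_cases hz0 : z = 0
  · -- z = 0 : harmonic series diverges, and 0 < re 0 is false
    subst hz0
    have hSeq : ∀ N, S N = ((∑ j ∈ range N, (1 / (j + 1) : ℝ) : ℝ) : ℂ) := by
      intro N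
      rw [hS]
      push_cast
      refine Finset.sum_congr rfl fun j _ => ?_
      have hprod : ∏ i ∈ range (j + 1), ((0 : ℂ) + ((i : ℂ) + 1))
          = ((j : ℂ) + 1) * (Nat.factorial j : ℂ) := by
        have h1 : ((j : ℂ) + 1) * (Nat.factorial j : ℂ) = ((Nat.factorial (j + 1) : ℕ) : ℂ) := by
          push_cast [Nat.factorial_succ]; ring
        rw [h1, ← Finset.prod_range_add_one_eq_factorial (j + 1), Nat.cast_prod]
        push_cast
        simp
      rw [hprod]
      have hf : (Nat.factorial j : ℂ) ≠ 0 := Nat.cast_ne_zero.2 (Nat.factorial_ne_zero j)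
      rw [mul_comm, ← div_div, div_self hf]
    have he : ∀ N, ‖S N‖ = ∑ j ∈ range N, (1 / (j + 1) : ℝ) := by
      intro N
      rw [hSeq N, Complex.norm_real, Real.norm_eq_abs, _root_.abs_of_nonneg (by positivity)]
    constructor
    · simp only [Complex.zero_re, lt_irrefl, iff_false]
      rintro ⟨L, hL⟩
      have hdiv : Tendsto (fun N => ‖S N‖) atTop atTop :=
        Tendsto.congr (fun N => (he N).symm) Real.tendsto_sum_range_one_div_nat_succ_atTop
      exact not_tendsto_atTop_of_tendsto_nhds hL.norm hdiv
    · intro h; simp at h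
  · -- z ≠ 0
    have hzk : ∀ i : ℕ, z + ((i : ℂ) + 1) ≠ 0 := by
      intro i h
      refine hz (-(i + 1)) (by omega) ?_
      push_cast
      linear_combination h
    have hGm : ∀ m : ℕ, z ≠ -(m : ℂ) := by
      intro m
      cases m with
      | zero => simpa using hz0
      | succ m =>
        intro h
        refine hz (-(m + 1)) (by omega) ?_
        rw [h]; push_cast; ring
    have hG : Complex.Gamma z ≠ 0 := Complex.Gamma_ne_zero hGm
    have hkey : ∀ᶠ N : ℕ in atTop, S N = 1 / z - Complex.GammaSeq z N * (N : ℂ) ^ (-z) := by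
      filter_upwards [eventually_ge_atTop 1] with N hN
      rw [hS]
      show (∑ j ∈ range N, (Nat.factorial j : ℂ) / ∏ i ∈ range (j + 1), (z + (i + 1))) = _
      rw [aux_sum_eq z hz0 hzk N, aux_R_eq z hN]
    have hfwd : 0 < z.re → Tendsto S atTop (𝓝 (1 / z)) := by
      intro hre
      have hcpow : Tendsto (fun n : ℕ => (n : ℂ) ^ (-z)) atTop (𝓝 0) := by
        rw [tendsto_zero_iff_norm_tendsto_zero]
        have : Tendsto (fun n : ℕ => ((n : ℝ)) ^ (-z.re)) atTop (𝓝 0) :=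
          (tendsto_rpow_neg_atTop hre).comp tendsto_natCast_atTop_atTop
        refine this.congr' ?_
        filter_upwards [eventually_ge_atTop 1] with n hn
        rw [Complex.norm_natCast_cpow_of_pos (by omega), Complex.neg_re]
      have : Tendsto (fun N : ℕ => 1 / z - Complex.GammaSeq z N * (N : ℂ) ^ (-z)) atTop
          (𝓝 (1 / z - Complex.Gamma z * 0)) :=
        tendsto_const_nhds.sub ((Complex.GammaSeq_tendsto_Gamma z).mul hcpow)
      rw [mul_zero, sub_zero] at this
      exact this.congr' (by filter_upwards [hkey] with N h using h.symm)
    refine ⟨⟨fun ⟨L, hL⟩ => ?_, fun h => ⟨1 / z, hfwd h⟩⟩, hfwd⟩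
    by_contra hre
    push_neg at hre
    have hR : Tendsto (fun N : ℕ => Complex.GammaSeq z N * (N : ℂ) ^ (-z)) atTop
        (𝓝 (1 / z - L)) := by
      have : Tendsto (fun N : ℕ => 1 / z - S N) atTop (𝓝 (1 / z - L)) :=
        tendsto_const_nhds.sub hL
      refine this.congr' ?_
      filter_upwards [hkey] with N h
      rw [h]; ring
    rcases lt_or_eq_of_le hre with hlt | heq
    · -- re z < 0 : norm blows up
      have hnormG : Tendsto (fun n : ℕ => ‖Complex.GammaSeq z n‖) atTop (𝓝 ‖Complex.Gamma z‖) :=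
        (Complex.GammaSeq_tendsto_Gamma z).norm
      have hpow : Tendsto (fun n : ℕ => ((n : ℝ)) ^ (-z.re)) atTop atTop :=
        (tendsto_rpow_atTop (by linarith)).comp tendsto_natCast_atTop_atTop
      have hbig : Tendsto (fun n : ℕ => ‖Complex.GammaSeq z n * (n : ℂ) ^ (-z)‖) atTop atTop := by
        have := Filter.Tendsto.pos_mul_atTop (norm_pos_iff.2 hG) hnormG hpow
        refine this.congr' ?_
        filter_upwards [eventually_ge_atTop 1] with n hn
        rw [norm_mul, Complex.norm_natCast_cpow_of_pos (by omega), Complex.neg_re]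
      exact not_tendsto_atTop_of_tendsto_nhds hR.norm hbig
    · -- re z = 0
      have hne : ∀ᶠ n : ℕ in atTop, Complex.GammaSeq z n ≠ 0 :=
        (Complex.GammaSeq_tendsto_Gamma z).eventually_ne hG
      have hcpow : Tendsto (fun n : ℕ => (n : ℂ) ^ (-z)) atTop
          (𝓝 ((Complex.Gamma z)⁻¹ * (1 / z - L))) := by
        have : Tendsto (fun n : ℕ => (Complex.GammaSeq z n)⁻¹ *
            (Complex.GammaSeq z n * (n : ℂ) ^ (-z))) atTop
            (𝓝 ((Complex.Gamma z)⁻¹ * (1 / z - L))) :=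
          (((Complex.GammaSeq_tendsto_Gamma z).inv₀ hG).mul hR)
        refine this.congr' ?_
        filter_upwards [hne] with n hn
        rw [← mul_assoc, inv_mul_cancel₀ hn, one_mul]
      have him : z.im ≠ 0 := by
        intro h
        exact hz0 (Complex.ext (by simp [heq]) (by simp [h]))
      exact aux_no_limit z heq him _ hcpow
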